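/- Let (X,d) be a metric space satisfying the ⊠-inequalities and let x,y,z,w ∈ X be four distinct points such that {x,y,z,w} is over-distance with respect to both {x,w} and {y,w}. Then ∠̃xzy + ∠̃yzw > π and ∠̃xzy + ∠̃xzw > π. -/

import Mathlib

noncomputable section

/-- A metric space satisfies the ⊠-inequalities. -/
def BoxIneq (X : Type*) [MetricSpace X] : Prop :=
  ∀ t ∈ Set.Icc (0:ℝ) 1, ∀ s ∈ Set.Icc (0:ℝ) 1, ∀ x y z w : X,
    0 ≤ (1 - t) * (1 - s) * dist x y ^ 2 + t * (1 - s) * dist y z ^ 2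
      + t * s * dist z w ^ 2 + (1 - t) * s * dist w x ^ 2
      - t * (1 - t) * dist x z ^ 2 - s * (1 - s) * dist y w ^ 2

/-- `{x,y,z,w}` is over-distance with respect to `{y,w}`: every configuration in `ℝ³`
realizing the five distances `d(x,y), d(y,z), d(z,x), d(x,w), d(w,z)` puts the points
corresponding to `y` and `w` strictly closer than `d(y,w)`.
Over-distance with respect to other pairs is obtained by permuting the arguments. -/
def OverDistance {X : Type*} [MetricSpace X] (x y z w : X) : Prop :=
  ∀ x' y' z' w' : EuclideanSpace ℝ (Fin 3),
    dist x' y' = dist x y → dist y' z' = dist y z → dist z' x' = dist z x →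
    dist x' w' = dist x w → dist w' z' = dist w z →
    dist y' w' < dist y w

/-- The comparison angle `∠̃abc` at `b`, computed by the law of cosines. -/
def compAngle {X : Type*} [MetricSpace X] (a b c : X) : ℝ :=
  Real.arccos ((dist b a ^ 2 + dist b c ^ 2 - dist a c ^ 2) / (2 * dist b a * dist b c))

def pt' (u v : ℝ) : EuclideanSpace ℝ (Fin 3) := (WithLp.equiv 2 (Fin 3 → ℝ)).symm ![u, v, 0]

lemma pt'_dist_sq (u1 v1 u2 v2 : ℝ) :
    dist (pt' u1 v1) (pt' u2 v2) ^ 2 = (u1 - u2) ^ 2 + (v1 - v2) ^ 2 := by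
  rw [EuclideanSpace.dist_eq, Real.sq_sqrt (by positivity)]
  simp [pt', Fin.sum_univ_three, Real.dist_eq, sq_abs]

def Ppol (r θ : ℝ) : EuclideanSpace ℝ (Fin 3) := pt' (r * Real.cos θ) (r * Real.sin θ)

lemma Ppol_dist_sq (r1 θ1 r2 θ2 : ℝ) :
    dist (Ppol r1 θ1) (Ppol r2 θ2) ^ 2 = r1 ^ 2 + r2 ^ 2 - 2 * r1 * r2 * Real.cos (θ1 - θ2) := by
  rw [Ppol, Ppol, pt'_dist_sq, Real.cos_sub]
  linear_combination (r1 ^ 2) * Real.sin_sq_add_cos_sq θ1 + (r2 ^ 2) * Real.sin_sq_add_cos_sq θ2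

lemma dist_eq_of_sq_eq {E F : Type*} [MetricSpace E] [MetricSpace F] {a b : E} {c d : F}
    (h : dist a b ^ 2 = dist c d ^ 2) : dist a b = dist c d := by
  rw [← Real.sqrt_sq (dist_nonneg : (0:ℝ) ≤ dist a b),
    ← Real.sqrt_sq (dist_nonneg : (0:ℝ) ≤ dist c d), h]

lemma compAngle_nonneg {X : Type*} [MetricSpace X] (a b c : X) : 0 ≤ compAngle a b c :=
  Real.arccos_nonneg _

lemma compAngle_le_pi {X : Type*} [MetricSpace X] (a b c : X) : compAngle a b c ≤ Real.pi :=
  Real.arccos_le_pi _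

lemma law_of_cos {X : Type*} [MetricSpace X] (p r q : X) (hp : p ≠ r) (hq : q ≠ r) :
    dist p q ^ 2
      = dist r p ^ 2 + dist r q ^ 2 - 2 * dist r p * dist r q * Real.cos (compAngle p r q) := by
  have hdp : 0 < dist r p := dist_pos.2 (Ne.symm hp)
  have hdq : 0 < dist r q := dist_pos.2 (Ne.symm hq)
  have ht1 : dist p q ≤ dist r p + dist r q := by
    rw [dist_comm r p]; exact dist_triangle p r q
  have ht2 : dist r p ≤ dist p q + dist r q := by
    rw [dist_comm r p, dist_comm r q]
    exact dist_triangle p q r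
  have ht3 : dist r q ≤ dist r p + dist p q := dist_triangle r p q
  have hpq : 0 ≤ dist p q := dist_nonneg
  have h1 : -1 ≤ (dist r p ^ 2 + dist r q ^ 2 - dist p q ^ 2) / (2 * dist r p * dist r q) := by
    rw [le_div_iff₀ (by positivity)]
    nlinarith
  have h2 : (dist r p ^ 2 + dist r q ^ 2 - dist p q ^ 2) / (2 * dist r p * dist r q) ≤ 1 := by
    rw [div_le_iff₀ (by positivity)]
    nlinarith
  rw [compAngle, Real.cos_arccos h1 h2]
  field_simp
  try ring

/-- Lemma 6.11: if `{x,y,z,w}` is over-distance with respect to both `{x,w}` and `{y,w}`,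
then `∠̃xzy + ∠̃yzw > π` and `∠̃xzy + ∠̃xzw > π`. -/
theorem double_overDistance_angle_sums {X : Type*} [MetricSpace X] (hX : BoxIneq X)
    (x y z w : X)
    (hxy : x ≠ y) (hxz : x ≠ z) (hxw : x ≠ w)
    (hyz : y ≠ z) (hyw : y ≠ w) (hzw : z ≠ w)
    (hxw' : OverDistance y x z w) (hyw' : OverDistance x y z w) :
    Real.pi < compAngle x z y + compAngle y z w ∧
    Real.pi < compAngle x z y + compAngle x z w := by
  set α := compAngle x z y with hαdef
  set β := compAngle y z w with hβdef
  set γ := compAngle x z w with hγdef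
  have hzx : (0:ℝ) < dist z x := dist_pos.2 (Ne.symm hxz)
  have hzy : (0:ℝ) < dist z y := dist_pos.2 (Ne.symm hyz)
  have hzw0 : (0:ℝ) < dist z w := dist_pos.2 hzw
  have hl1 : dist x y ^ 2
      = dist z x ^ 2 + dist z y ^ 2 - 2 * dist z x * dist z y * Real.cos α :=
    law_of_cos x z y hxz hyz
  have hl2 : dist y w ^ 2
      = dist z y ^ 2 + dist z w ^ 2 - 2 * dist z y * dist z w * Real.cos β :=
    law_of_cos y z w hyz (Ne.symm hzw)
  have hl3 : dist x w ^ 2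
      = dist z x ^ 2 + dist z w ^ 2 - 2 * dist z x * dist z w * Real.cos γ :=
    law_of_cos x z w hxz (Ne.symm hzw)
  -- fact 1 : cos γ < cos (α + β), via hxw' with config (y',x',z',w') = (b,0),(a,α),(0,0),(c,-β)
  have f1 : Real.cos γ < Real.cos (α + β) := by
    have e12 : dist (Ppol (dist z y) 0) (Ppol (dist z x) α) = dist y x := by
      apply dist_eq_of_sq_eq
      rw [Ppol_dist_sq, dist_comm y x, hl1, zero_sub, Real.cos_neg]; try ring
    have e23 : dist (Ppol (dist z x) α) (Ppol 0 0) = dist x z := by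
      apply dist_eq_of_sq_eq
      rw [Ppol_dist_sq, dist_comm x z]; try ring
    have e31 : dist (Ppol 0 0) (Ppol (dist z y) 0) = dist z y := by
      apply dist_eq_of_sq_eq
      rw [Ppol_dist_sq]; try ring
    have e14 : dist (Ppol (dist z y) 0) (Ppol (dist z w) (-β)) = dist y w := by
      apply dist_eq_of_sq_eq
      rw [Ppol_dist_sq, hl2, zero_sub, neg_neg]; try ring
    have e43 : dist (Ppol (dist z w) (-β)) (Ppol 0 0) = dist w z := by
      apply dist_eq_of_sq_eq
      rw [Ppol_dist_sq, dist_comm w z]; try ring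
    have key := hxw' _ _ _ _ e12 e23 e31 e14 e43
    have key2 := pow_lt_pow_left₀ key dist_nonneg (n := 2) (by norm_num)
    rw [Ppol_dist_sq, hl3, sub_neg_eq_add] at key2
    nlinarith [mul_pos hzx hzw0]
  -- fact 2 : cos β < cos (α - γ), via hyw' with config (x',y',z',w') = (a,0),(b,α),(0,0),(c,γ)
  have f2 : Real.cos β < Real.cos (α - γ) := by
    have e12 : dist (Ppol (dist z x) 0) (Ppol (dist z y) α) = dist x y := by
      apply dist_eq_of_sq_eq
      rw [Ppol_dist_sq, hl1, zero_sub, Real.cos_neg]; try ring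
    have e23 : dist (Ppol (dist z y) α) (Ppol 0 0) = dist y z := by
      apply dist_eq_of_sq_eq
      rw [Ppol_dist_sq, dist_comm y z]; try ring
    have e31 : dist (Ppol 0 0) (Ppol (dist z x) 0) = dist z x := by
      apply dist_eq_of_sq_eq
      rw [Ppol_dist_sq]; try ring
    have e14 : dist (Ppol (dist z x) 0) (Ppol (dist z w) γ) = dist x w := by
      apply dist_eq_of_sq_eq
      rw [Ppol_dist_sq, hl3, zero_sub, Real.cos_neg]; try ring
    have e43 : dist (Ppol (dist z w) γ) (Ppol 0 0) = dist w z := by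
      apply dist_eq_of_sq_eq
      rw [Ppol_dist_sq, dist_comm w z]; try ring
    have key := hyw' _ _ _ _ e12 e23 e31 e14 e43
    have key2 := pow_lt_pow_left₀ key dist_nonneg (n := 2) (by norm_num)
    rw [Ppol_dist_sq, hl2] at key2
    nlinarith [mul_pos hzy hzw0]
  -- fact 3 : cos β < cos (α + γ), same as f2 but w' at angle -γ
  have f3 : Real.cos β < Real.cos (α + γ) := by
    have e12 : dist (Ppol (dist z x) 0) (Ppol (dist z y) α) = dist x y := by
      apply dist_eq_of_sq_eq
      rw [Ppol_dist_sq, hl1, zero_sub, Real.cos_neg]; try ring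
    have e23 : dist (Ppol (dist z y) α) (Ppol 0 0) = dist y z := by
      apply dist_eq_of_sq_eq
      rw [Ppol_dist_sq, dist_comm y z]; try ring
    have e31 : dist (Ppol 0 0) (Ppol (dist z x) 0) = dist z x := by
      apply dist_eq_of_sq_eq
      rw [Ppol_dist_sq]; try ring
    have e14 : dist (Ppol (dist z x) 0) (Ppol (dist z w) (-γ)) = dist x w := by
      apply dist_eq_of_sq_eq
      rw [Ppol_dist_sq, hl3, zero_sub, neg_neg]; try ring
    have e43 : dist (Ppol (dist z w) (-γ)) (Ppol 0 0) = dist w z := by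
      apply dist_eq_of_sq_eq
      rw [Ppol_dist_sq, dist_comm w z]; try ring
    have key := hyw' _ _ _ _ e12 e23 e31 e14 e43
    have key2 := pow_lt_pow_left₀ key dist_nonneg (n := 2) (by norm_num)
    rw [Ppol_dist_sq, hl2, sub_neg_eq_add] at key2
    nlinarith [mul_pos hzy hzw0]
  -- fact 4 : cos γ < cos (α - β), same as f1 but w' at angle β
  have f4 : Real.cos γ < Real.cos (α - β) := by
    have e12 : dist (Ppol (dist z y) 0) (Ppol (dist z x) α) = dist y x := by
      apply dist_eq_of_sq_eq
      rw [Ppol_dist_sq, dist_comm y x, hl1, zero_sub, Real.cos_neg]; try ring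
    have e23 : dist (Ppol (dist z x) α) (Ppol 0 0) = dist x z := by
      apply dist_eq_of_sq_eq
      rw [Ppol_dist_sq, dist_comm x z]; try ring
    have e31 : dist (Ppol 0 0) (Ppol (dist z y) 0) = dist z y := by
      apply dist_eq_of_sq_eq
      rw [Ppol_dist_sq]; try ring
    have e14 : dist (Ppol (dist z y) 0) (Ppol (dist z w) β) = dist y w := by
      apply dist_eq_of_sq_eq
      rw [Ppol_dist_sq, hl2, zero_sub, Real.cos_neg]; try ring
    have e43 : dist (Ppol (dist z w) β) (Ppol 0 0) = dist w z := by
      apply dist_eq_of_sq_eq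
      rw [Ppol_dist_sq, dist_comm w z]; try ring
    have key := hxw' _ _ _ _ e12 e23 e31 e14 e43
    have key2 := pow_lt_pow_left₀ key dist_nonneg (n := 2) (by norm_num)
    rw [Ppol_dist_sq, hl3] at key2
    nlinarith [mul_pos hzx hzw0]
  have hα0 : 0 ≤ α := compAngle_nonneg _ _ _
  have hβ0 : 0 ≤ β := compAngle_nonneg _ _ _
  have hγ0 : 0 ≤ γ := compAngle_nonneg _ _ _
  have hαπ : α ≤ Real.pi := compAngle_le_pi _ _ _
  have hβπ : β ≤ Real.pi := compAngle_le_pi _ _ _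
  have hγπ : γ ≤ Real.pi := compAngle_le_pi _ _ _
  constructor
  · by_contra h
    push_neg at h
    have hg : α + β < γ := by
      by_contra hg
      push_neg at hg
      have := Real.cos_le_cos_of_nonneg_of_le_pi hγ0 h hg
      linarith
    have h5 : Real.cos (γ - α) < Real.cos β :=
      Real.cos_lt_cos_of_nonneg_of_le_pi hβ0 (by linarith) (by linarith)
    have h6 : Real.cos (α - γ) = Real.cos (γ - α) := by
      rw [← Real.cos_neg (α - γ), neg_sub]
    linarith
  · by_contra h
    push_neg at h
    have hg : α + γ < β := by
      by_contra hg
      push_neg at hg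
      have := Real.cos_le_cos_of_nonneg_of_le_pi hβ0 h hg
      linarith
    have h5 : Real.cos (β - α) < Real.cos γ :=
      Real.cos_lt_cos_of_nonneg_of_le_pi hγ0 (by linarith) (by linarith)
    have h6 : Real.cos (α - β) = Real.cos (β - α) := by
      rw [← Real.cos_neg (α - β), neg_sub]
    linarith
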